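/- For every natural number q ≥ 1 and every real ℓ with 1 ≤ ℓ ≤ q+1, setting b_q = 1 + 1/q and b_{q+1} = 1 + 1/(q+1), one has b_{q+1}^{-ℓ-1} · ( b_q^ℓ/(b_q - 1) + 1 + b_{q+1} ) · (b_{q+1} - 1) ≤ 1. -/

import Mathlib

open Real

lemma bernoulli3 (x : ℝ) (hx : 0 ≤ x) : ∀ n : ℕ, 1 + n * x + n * (n - 1) / 2 * x ^ 2 ≤ (1 + x) ^ n
  | 0 => by norm_num
  | (n + 1) => by
    have ih := bernoulli3 x hx n
    have h1 : (0:ℝ) ≤ 1 + x := by linarith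
    have hnn : (0:ℝ) ≤ (n:ℝ) * ((n:ℝ) - 1) := by
      rcases Nat.eq_zero_or_pos n with h | h
      · simp [h]
      · have : (1:ℝ) ≤ (n:ℝ) := by exact_mod_cast h
        nlinarith [Nat.cast_nonneg (α := ℝ) n]
    have key := mul_le_mul_of_nonneg_right ih h1
    have hps : (1 + x) ^ (n + 1) = (1 + x) ^ n * (1 + x) := by ring
    rw [hps]
    push_cast
    nlinarith [mul_nonneg (mul_nonneg hnn hx) (sq_nonneg x), key, hx, sq_nonneg x,
      Nat.cast_nonneg (α := ℝ) n]

lemma endpoint (q : ℕ) (Q a b : ℝ) (hQ : (q:ℝ) = Q) (hQ1 : 1 ≤ Q)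
    (ha' : a = 1 + 1/Q) (hb' : b = 1 + 1/(Q+1)) :
    Q * a ^ (q+1) + 1 + b ≤ (Q + 2) * b ^ (q+1) := by
  have hQ0 : (0:ℝ) < Q := by linarith
  have ha : (0:ℝ) < a := by rw [ha']; positivity
  have hb : (0:ℝ) < b := by rw [hb']; positivity
  have hApos : (0:ℝ) < a ^ q := pow_pos ha q
  -- lower bound on a^q
  have hA : 5*Q - 1 ≤ 2*Q * a ^ q := by
    have h3 := bernoulli3 (1/Q) (by positivity) q
    rw [← ha', hQ] at h3
    have he : 1 + Q * (1/Q) + Q * (Q - 1) / 2 * (1/Q)^2 = (5*Q - 1)/(2*Q) := by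
      field_simp; ring
    rw [he] at h3
    calc 5*Q - 1 = 2*Q * ((5*Q-1)/(2*Q)) := by field_simp
      _ ≤ 2*Q * a^q := mul_le_mul_of_nonneg_left h3 (by positivity)
  -- Bernoulli lower bound on (b/a)^q
  have hBa : 1 - Q/(Q+1)^2 ≤ (b/a) ^ q := by
    have hx : (-2:ℝ) ≤ -(1/(Q+1)^2) := by
      have : (1:ℝ)/(Q+1)^2 ≤ 1 := by
        rw [div_le_one (by positivity)]; nlinarith
      linarith
    have h := one_add_mul_le_pow hx q
    have he : 1 + (-(1/(Q+1)^2)) = b/a := by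
      rw [ha', hb']; field_simp; ring
    have he2 : 1 + (q:ℝ) * (-(1/(Q+1)^2)) = 1 - Q/(Q+1)^2 := by rw [hQ]; ring
    rw [he, he2] at h
    exact h
  -- b^(q+2) expressed through a^q
  have hbq2 : a ^ q * ((b/a) ^ q * b^2) = b ^ (q+2) := by
    rw [div_pow]; field_simp; ring
  have hB : a ^ q * ((1 - Q/(Q+1)^2) * b^2) ≤ b ^ (q+2) := by
    rw [← hbq2]
    exact mul_le_mul_of_nonneg_left
      (mul_le_mul_of_nonneg_right hBa (by positivity)) hApos.le
  have hKeq : (1 - Q/(Q+1)^2) * b^2 = (Q^2+Q+1)*(Q+2)^2/(Q+1)^4 := by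
    rw [hb']; field_simp; ring
  rw [hKeq] at hB
  -- key step: a^q + (2Q+3)/(Q+1)^2 ≤ b^(q+2)
  have hP : a ^ q + (2*Q+3)/(Q+1)^2 ≤ b ^ (q+2) := by
    have h5 : (2*Q+3)/(Q+1)^2 ≤ a^q * ((Q^3+3*Q^2+4*Q+3)/(Q+1)^4) := by
      rw [mul_div_assoc']
      rw [div_le_div_iff₀ (by positivity) (by positivity)]
      have hmul := mul_le_mul_of_nonneg_right hA
          (show (0:ℝ) ≤ (Q^3+3*Q^2+4*Q+3)*(Q+1)^2 by positivity)
      have hpoly : 2*Q*(2*Q+3)*(Q+1)^4 ≤ (5*Q-1)*((Q^3+3*Q^2+4*Q+3)*(Q+1)^2) := by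
        nlinarith [hQ1, sq_nonneg (Q-1), sq_nonneg (Q+1), sq_nonneg (Q^2-1),
          mul_nonneg (sub_nonneg.2 hQ1) (sub_nonneg.2 hQ1),
          mul_nonneg (mul_nonneg (sub_nonneg.2 hQ1) hQ0.le) hQ0.le]
      have h2Q : (0:ℝ) < 2*Q := by linarith
      rw [← mul_le_mul_iff_of_pos_left h2Q]
      nlinarith [hmul, hpoly]
    have he : a^q * ((Q^2+Q+1)*(Q+2)^2/(Q+1)^4)
        = a^q + a^q * ((Q^3+3*Q^2+4*Q+3)/(Q+1)^4) := by
      field_simp; ring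
    rw [he] at hB
    linarith
  -- derive the endpoint inequality
  have h6 : (Q+1) * (a^q + (2*Q+3)/(Q+1)^2) ≤ (Q+1) * b^(q+2) :=
    mul_le_mul_of_nonneg_left hP (by linarith)
  have e1 : (Q+1) * (a^q + (2*Q+3)/(Q+1)^2) = (Q+1)*a^q + 1 + b := by
    rw [hb']; field_simp; ring
  have e2 : (Q+1) * b^(q+2) = (Q+2) * b^(q+1) := by
    have h : b^(q+2) = b^(q+1) * b := by ring
    rw [h, hb']; field_simp; ring
  have e3 : Q * a^(q+1) = (Q+1) * a^q := by
    have h : a^(q+1) = a^q * a := by ring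
    rw [h, ha']; field_simp
  rw [e1, e2] at h6
  linarith [h6, e3]

lemma key (q : ℕ) (Q a b ℓ : ℝ) (hQ : (q:ℝ) = Q) (hQ1 : 1 ≤ Q)
    (ha' : a = 1 + 1/Q) (hb' : b = 1 + 1/(Q+1)) (hℓ1 : 1 ≤ ℓ) (hℓ2 : ℓ ≤ Q + 1) :
    Q * a ^ ℓ + 1 + b ≤ (Q + 2) * b ^ ℓ := by
  have hQ0 : (0:ℝ) < Q := by linarith
  have ha : (0:ℝ) < a := by rw [ha']; positivity
  have hb : (0:ℝ) < b := by rw [hb']; positivity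
  have hr : (0:ℝ) < a / b := div_pos ha hb
  have hs : (0:ℝ) < b⁻¹ := inv_pos.2 hb
  have h1b : (0:ℝ) < 1 + b := by linarith
  obtain ⟨t, ht0, ht1, hℓt⟩ : ∃ t, 0 ≤ t ∧ t ≤ 1 ∧ ℓ = (1 - t) + (Q + 1) * t := by
    refine ⟨(ℓ - 1)/Q, div_nonneg (by linarith) hQ0.le, ?_, ?_⟩
    · rw [div_le_one hQ0]; linarith
    · field_simp
      ring
  -- chord bound via weighted AM-GM
  have chord : ∀ c : ℝ, 0 < c → c ^ ℓ ≤ (1 - t) * c + t * c ^ (Q + 1) := by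
    intro c hc
    have h := Real.geom_mean_le_arith_mean2_weighted (by linarith : (0:ℝ) ≤ 1 - t) ht0
      hc.le (Real.rpow_nonneg hc.le (Q+1)) (by ring)
    have e : c ^ (1 - t) * (c ^ (Q+1)) ^ t = c ^ ℓ := by
      rw [← Real.rpow_mul hc.le, ← Real.rpow_add hc, ← hℓt]
    calc c ^ ℓ = c ^ (1 - t) * (c ^ (Q+1)) ^ t := e.symm
      _ ≤ (1 - t) * c + t * c ^ (Q + 1) := h
  -- rpow with exponent Q+1 is the natural power q+1
  have hnat : ∀ c : ℝ, 0 < c → c ^ (Q + 1) = c ^ (q + 1 : ℕ) := by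
    intro c hc
    rw [← hQ, ← Real.rpow_natCast c (q+1)]
    push_cast
    ring_nf
  -- endpoint value at ℓ = 1
  have E1 : Q * (a/b) + (1 + b) * b⁻¹ = Q + 2 := by
    rw [ha', hb']; field_simp; ring
  -- endpoint value at ℓ = Q+1
  have E2 : Q * (a/b) ^ (Q+1) + (1 + b) * (b⁻¹) ^ (Q+1) ≤ Q + 2 := by
    rw [hnat _ hr, hnat _ hs]
    have hbp : (0:ℝ) < b ^ (q+1) := pow_pos hb _
    rw [← mul_le_mul_iff_of_pos_right hbp]
    have e : (Q * (a/b) ^ (q+1 : ℕ) + (1 + b) * (b⁻¹) ^ (q+1 : ℕ)) * b ^ (q+1)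
        = Q * a ^ (q+1) + (1 + b) := by
      rw [div_pow, inv_pow]
      field_simp
    rw [e]
    have := endpoint q Q a b hQ hQ1 ha' hb'
    linarith
  -- combine with the chord bounds
  have c1 := mul_le_mul_of_nonneg_left (chord (a/b) hr) hQ0.le
  have c2 := mul_le_mul_of_nonneg_left (chord b⁻¹ hs) h1b.le
  have gle : Q * (a/b) ^ ℓ + (1 + b) * (b⁻¹) ^ ℓ ≤ Q + 2 := by
    have h3 : Q * (a/b) ^ ℓ + (1 + b) * (b⁻¹) ^ ℓ
        ≤ (1 - t) * (Q * (a/b) + (1 + b) * b⁻¹)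
          + t * (Q * (a/b) ^ (Q+1) + (1 + b) * (b⁻¹) ^ (Q+1)) := by nlinarith [c1, c2]
    have h4 := mul_le_mul_of_nonneg_left E2 ht0
    rw [E1] at h3
    nlinarith [h3, h4, ht1]
  -- multiply back by b^ℓ
  have hblp : (0:ℝ) < b ^ ℓ := Real.rpow_pos_of_pos hb ℓ
  have h5 := mul_le_mul_of_nonneg_right gle hblp.le
  have e : (Q * (a/b) ^ ℓ + (1 + b) * (b⁻¹) ^ ℓ) * b ^ ℓ = Q * a ^ ℓ + (1 + b) := by
    rw [Real.div_rpow ha.le hb.le, Real.inv_rpow hb.le]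
    field_simp
  rw [e] at h5
  linarith

theorem h_ql_le_one (q : ℕ) (hq : 1 ≤ q) (ℓ : ℝ) (hℓ1 : 1 ≤ ℓ) (hℓ2 : ℓ ≤ (q : ℝ) + 1) :
    (1 + 1 / ((q : ℝ) + 1)) ^ (-ℓ - 1) *
      ((1 + 1 / (q : ℝ)) ^ ℓ / ((1 + 1 / (q : ℝ)) - 1) + 1 + (1 + 1 / ((q : ℝ) + 1))) *
      ((1 + 1 / ((q : ℝ) + 1)) - 1) ≤ 1 := by
  have hQ1 : (1:ℝ) ≤ (q:ℝ) := by exact_mod_cast hq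
  have hQ0 : (0:ℝ) < (q:ℝ) := by linarith
  have hb : (0:ℝ) < 1 + 1/((q:ℝ)+1) := by positivity
  have hkey := key q (q:ℝ) (1 + 1/(q:ℝ)) (1 + 1/((q:ℝ)+1)) ℓ rfl hQ1 rfl rfl hℓ1 hℓ2
  have h1 : (1 + 1/(q:ℝ)) - 1 = 1/(q:ℝ) := by ring
  have h2 : (1 + 1/((q:ℝ)+1)) - 1 = 1/((q:ℝ)+1) := by ring
  have hbneg : (1 + 1/((q:ℝ)+1)) ^ (-ℓ - 1)
      = ((1 + 1/((q:ℝ)+1)) ^ ℓ * (1 + 1/((q:ℝ)+1)))⁻¹ := by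
    rw [show -ℓ - 1 = -(ℓ + 1) by ring, Real.rpow_neg hb.le, Real.rpow_add hb,
      Real.rpow_one]
  have eS : (1 + 1/(q:ℝ)) ^ ℓ / (1/(q:ℝ)) = (1 + 1/(q:ℝ)) ^ ℓ * (q:ℝ) := by
    field_simp
  rw [h1, h2, hbneg, eS]
  have hX : (0:ℝ) < (1 + 1/((q:ℝ)+1)) ^ ℓ * (1 + 1/((q:ℝ)+1)) :=
    mul_pos (Real.rpow_pos_of_pos hb ℓ) hb
  rw [inv_mul_eq_div, div_mul_eq_mul_div, div_le_one hX, mul_one_div,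
    div_le_iff₀ (by positivity : (0:ℝ) < (q:ℝ)+1)]
  have hbb : (1 + 1/((q:ℝ)+1)) * ((q:ℝ) + 1) = (q:ℝ) + 2 := by field_simp; ring
  have e : (1 + 1/((q:ℝ)+1)) ^ ℓ * (1 + 1/((q:ℝ)+1)) * ((q:ℝ)+1)
      = ((q:ℝ) + 2) * (1 + 1/((q:ℝ)+1)) ^ ℓ := by
    rw [mul_assoc, hbb]; ring
  rw [e]
  linarith [hkey]
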